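/- Upper bound for the odd case: for any subset S̄ of Ω of size v − s ≥ 1 with distinguished element g*, the quantity F_{odd,3} defined as above satisfies F_{odd,3} ≤ 3·2^{2n}(2(v−s) − 1)², with equality if and only if S̄ is even. -/

import Mathlib

open Complex Finset

noncomputable def ipow (a : ZMod 4) : ℂ := Complex.I ^ a.val

def isOddZ4 (a : ZMod 4) : Prop := a = 1 ∨ a = 3

instance : DecidablePred isOddZ4 := fun a => by unfold isOddZ4; infer_instance

/-- `g` has an odd entry and its first (lowest-index) odd entry equals 1. -/
def inOmega {n : ℕ} (g : Fin n → ZMod 4) : Prop :=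
  ∃ i : Fin n, g i = 1 ∧ ∀ j : Fin n, j < i → ¬ isOddZ4 (g j)

instance {n : ℕ} : DecidablePred (inOmega (n := n)) := fun g => by
  unfold inOmega; infer_instance

def allEven {n : ℕ} (u : Fin n → ZMod 4) : Prop := ∀ i, u i = 0 ∨ u i = 2

instance {n : ℕ} : DecidablePred (allEven (n := n)) := fun u => by
  unfold allEven; infer_instance

def dot4 {n : ℕ} (u w : Fin n → ZMod 4) : ZMod 4 := ∑ i, u i * w i

/-- σ̄_{odd,u} of (A.14): the distinguished (partial) generator g* contributes
(i^{u·g*} + i^{3-u·g*})/(1-i), the remaining elements of S̄ contribute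
i^{u·g} + i^{-u·g}. -/
noncomputable def sigOdd {n : ℕ} (Sb : Finset (Fin n → ZMod 4))
    (gstar : Fin n → ZMod 4) (u : Fin n → ZMod 4) : ℂ :=
  (ipow (dot4 u gstar) + ipow (3 - dot4 u gstar)) / (1 - Complex.I)
    + ∑ g ∈ Sb.erase gstar, (ipow (dot4 u g) + ipow (-(dot4 u g)))

open scoped ComplexOrder

/- ### auxiliary material -/

lemma I4 : (Complex.I)^(4:ℕ) = 1 := by norm_num [pow_succ, Complex.I_mul_I]

lemma ipow_add (a b : ZMod 4) : ipow (a+b) = ipow a * ipow b := by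
  unfold ipow
  rw [← pow_add, ZMod.val_add]; exact (pow_eq_pow_mod _ I4).symm

lemma ipow_zero : ipow 0 = 1 := by unfold ipow; norm_num

lemma ipow_one : ipow 1 = Complex.I := by
  unfold ipow; norm_num [show (1:ZMod 4).val = 1 from rfl]

lemma ipow_two : ipow 2 = -1 := by
  unfold ipow
  norm_num [show (2:ZMod 4).val = 2 from rfl, pow_succ, Complex.I_mul_I]

lemma ipow_three : ipow 3 = -Complex.I := by
  unfold ipow
  norm_num [show (3:ZMod 4).val = 3 from rfl, pow_succ, Complex.I_mul_I]

lemma ipow_sum {α : Type*} (s : Finset α) (f : α → ZMod 4) :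
    ipow (∑ i ∈ s, f i) = ∏ i ∈ s, ipow (f i) := by
  induction s using Finset.cons_induction with
  | empty => simp [ipow_zero]
  | cons a s ha ih => rw [Finset.sum_cons, Finset.prod_cons, ipow_add, ih]

/-- parity map `ZMod 4 → ZMod 2` -/
def par2 : ZMod 4 → ZMod 2 := fun a => (a.val : ZMod 2)

lemma par2_add : ∀ a b : ZMod 4, par2 (a+b) = par2 a + par2 b := by decide
lemma par2_neg : ∀ a : ZMod 4, par2 (-a) = par2 a := by decide
lemma par2_even_iff : ∀ a : ZMod 4, (a = 0 ∨ a = 2) ↔ par2 a = 0 := by decide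

def par {n : ℕ} (x : Fin n → ZMod 4) : Fin n → ZMod 2 := fun i => par2 (x i)

lemma par_add {n : ℕ} (x y : Fin n → ZMod 4) : par (x+y) = par x + par y := by
  funext i; exact par2_add _ _

lemma par_neg {n : ℕ} (x : Fin n → ZMod 4) : par (-x) = par x := by
  funext i; exact par2_neg _

lemma allEven_iff_par {n : ℕ} (x : Fin n → ZMod 4) : allEven x ↔ par x = 0 := by
  unfold allEven par
  constructor
  · intro h; funext i; exact (par2_even_iff _).mp (h i)
  · intro h i; exact (par2_even_iff _).mpr (congrFun h i)

lemma par_self_add {n : ℕ} (x : Fin n → ZMod 4) : par x + par x = 0 := by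
  funext i
  have : ∀ a : ZMod 2, a + a = 0 := by decide
  exact this _

/-- two elements of Ω are never negatives of each other -/
lemma inOmega_ne_neg {n : ℕ} {g g' : Fin n → ZMod 4} (h : inOmega g)
    (h' : inOmega g') : g ≠ -g' := by
  rintro rfl
  obtain ⟨i, hi1, hi2⟩ := h
  obtain ⟨i', hi'1, hi'2⟩ := h'
  have hodd : ∀ a : ZMod 4, isOddZ4 (-a) ↔ isOddZ4 a := by decide
  rcases lt_trichotomy i i' with hlt | rfl | hlt
  · have h1 : -(g' i) = 1 := by simpa using hi1
    have h3 : g' i = 3 := by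
      have := congrArg Neg.neg h1
      simp at this; rw [this]; decide
    exact hi'2 i hlt (by rw [h3]; decide)
  · have h1 : -(g' i) = 1 := by simpa using hi1
    rw [hi'1] at h1
    exact absurd h1 (by decide)
  · exact hi2 i' hlt (by rw [show (-g') i' = -(g' i') by simp, hi'1]; decide)

lemma inOmega_par_ne_zero {n : ℕ} {g : Fin n → ZMod 4} (h : inOmega g) :
    par g ≠ 0 := by
  obtain ⟨i, hi1, _⟩ := h
  intro hc
  have h2 : par2 (g i) = 0 := by
    have := congrFun hc i
    simpa [par] using this
  rw [hi1] at h2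
  exact absurd h2 (by decide)

lemma inOmega_ne_zero {n : ℕ} {g : Fin n → ZMod 4} (h : inOmega g) : g ≠ 0 := by
  intro hc
  obtain ⟨i, hi1, _⟩ := h
  rw [hc, Pi.zero_apply] at hi1
  exact absurd hi1 (by decide)

lemma dot4_add_right {n : ℕ} (u x y : Fin n → ZMod 4) :
    dot4 u (x + y) = dot4 u x + dot4 u y := by
  unfold dot4
  rw [← Finset.sum_add_distrib]
  exact Finset.sum_congr rfl fun i _ => by simp [mul_add]

lemma dot4_neg_right {n : ℕ} (u x : Fin n → ZMod 4) :
    dot4 u (-x) = -dot4 u x := by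
  unfold dot4
  rw [← Finset.sum_neg_distrib]
  exact Finset.sum_congr rfl fun i _ => by simp

lemma chi_mul {n : ℕ} (u x y : Fin n → ZMod 4) :
    ipow (dot4 u x) * ipow (dot4 u y) = ipow (dot4 u (x + y)) := by
  rw [dot4_add_right, ipow_add]

lemma dot4_comm {n : ℕ} (u x : Fin n → ZMod 4) : dot4 u x = dot4 x u := by
  unfold dot4; exact Finset.sum_congr rfl fun i _ => mul_comm _ _

lemma zmod4_cases : ∀ c : ZMod 4, c = 0 ∨ c = 1 ∨ c = 2 ∨ c = 3 := by decide

/-- single-coordinate full character sum -/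
lemma char_sum_one (c : ZMod 4) :
    ∑ a : ZMod 4, ipow (a * c) = if c = 0 then 4 else 0 := by
  have hex : ∀ f : ZMod 4 → ℂ, ∑ a : ZMod 4, f a = f 0 + f 1 + f 2 + f 3 := by
    intro f
    show ∑ a : Fin 4, f a = _
    exact Fin.sum_univ_four f
  rcases zmod4_cases c with rfl | rfl | rfl | rfl
  · rw [hex, if_pos rfl]
    simp only [mul_zero, ipow_zero]; norm_num
  · rw [hex, if_neg (by decide), show (0:ZMod 4)*1 = 0 by decide,
      show (1:ZMod 4)*1 = 1 by decide, show (2:ZMod 4)*1 = 2 by decide,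
      show (3:ZMod 4)*1 = 3 by decide, ipow_zero, ipow_one, ipow_two, ipow_three]
    ring
  · rw [hex, if_neg (by decide), show (0:ZMod 4)*2 = 0 by decide,
      show (1:ZMod 4)*2 = 2 by decide, show (2:ZMod 4)*2 = 0 by decide,
      show (3:ZMod 4)*2 = 2 by decide, ipow_zero, ipow_two]
    ring
  · rw [hex, if_neg (by decide), show (0:ZMod 4)*3 = 0 by decide,
      show (1:ZMod 4)*3 = 3 by decide, show (2:ZMod 4)*3 = 2 by decide,
      show (3:ZMod 4)*3 = 1 by decide, ipow_zero, ipow_one, ipow_two, ipow_three]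
    ring

/-- single-coordinate even character sum -/
lemma char_sum_even (c : ZMod 4) :
    ∑ a ∈ ({0, 2} : Finset (ZMod 4)), ipow (a * c) =
      if c = 0 ∨ c = 2 then 2 else 0 := by
  have hex : ∀ f : ZMod 4 → ℂ, ∑ a ∈ ({0, 2} : Finset (ZMod 4)), f a = f 0 + f 2 := by
    intro f; rw [Finset.sum_pair (by decide)]
  rcases zmod4_cases c with rfl | rfl | rfl | rfl
  · rw [hex, if_pos (Or.inl rfl)]
    simp only [mul_zero, ipow_zero]; norm_num
  · rw [hex, if_neg (by decide), show (0:ZMod 4)*1 = 0 by decide,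
      show (2:ZMod 4)*1 = 2 by decide, ipow_zero, ipow_two]
    ring
  · rw [hex, if_pos (Or.inr rfl), show (0:ZMod 4)*2 = 0 by decide,
      show (2:ZMod 4)*2 = 0 by decide, ipow_zero]
    ring
  · rw [hex, if_neg (by decide), show (0:ZMod 4)*3 = 0 by decide,
      show (2:ZMod 4)*3 = 2 by decide, ipow_zero, ipow_two]
    ring

lemma ipow_dot4 {n : ℕ} (u g : Fin n → ZMod 4) :
    ipow (dot4 u g) = ∏ i, ipow (u i * g i) := by
  unfold dot4; exact ipow_sum _ _

lemma char_sum_full {n : ℕ} (g : Fin n → ZMod 4) :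
    ∑ u : Fin n → ZMod 4, ipow (dot4 u g) =
      if g = 0 then (4:ℂ)^n else 0 := by
  have step1 : ∑ u : Fin n → ZMod 4, ipow (dot4 u g)
      = ∏ i, ∑ a : ZMod 4, ipow (a * g i) := by
    rw [Finset.prod_univ_sum (fun _ : Fin n => (univ : Finset (ZMod 4)))
      (fun i a => ipow (a * g i)), Fintype.piFinset_univ]
    exact Finset.sum_congr rfl fun u _ => ipow_dot4 u g
  rw [step1, Finset.prod_congr rfl fun i _ => char_sum_one (g i)]
  by_cases hgz : g = 0
  · subst hgz; simp
  · rw [if_neg hgz]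
    have : ∃ i, g i ≠ 0 := by
      by_contra hc
      push_neg at hc
      exact hgz (funext hc)
    obtain ⟨i, hi⟩ := this
    exact Finset.prod_eq_zero (Finset.mem_univ i) (by rw [if_neg hi])

lemma char_sum_evenset {n : ℕ} (g : Fin n → ZMod 4) :
    ∑ u ∈ Finset.univ.filter (allEven (n := n)), ipow (dot4 u g) =
      if allEven g then (2:ℂ)^n else 0 := by
  have hset : Finset.univ.filter (allEven (n := n)) =
      Fintype.piFinset (fun _ : Fin n => ({0,2} : Finset (ZMod 4))) := by
    ext u
    simp only [Finset.mem_filter, Finset.mem_univ, true_and, Fintype.mem_piFinset]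
    unfold allEven
    simp
  have step1 : ∑ u ∈ Finset.univ.filter (allEven (n := n)), ipow (dot4 u g)
      = ∏ i, ∑ a ∈ ({0,2} : Finset (ZMod 4)), ipow (a * g i) := by
    rw [Finset.prod_univ_sum (fun _ : Fin n => ({0,2} : Finset (ZMod 4)))
      (fun i a => ipow (a * g i)), hset]
    exact Finset.sum_congr rfl fun u _ => ipow_dot4 u g
  rw [step1, Finset.prod_congr rfl fun i _ => char_sum_even (g i)]
  by_cases hgz : allEven g
  · rw [if_pos hgz, Finset.prod_congr rfl fun i _ => if_pos (hgz i)]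
    simp
  · rw [if_neg hgz]
    unfold allEven at hgz
    push_neg at hgz
    obtain ⟨i, hi⟩ := hgz
    refine Finset.prod_eq_zero (Finset.mem_univ i) ?_
    rw [if_neg (by tauto)]

/- ### the weight function -/

section Weights

variable {n : ℕ} (Sb : Finset (Fin n → ZMod 4)) (gstar : Fin n → ZMod 4)

/-- the weight function encoding `sigOdd` as a character combination -/
noncomputable def wgt (x : Fin n → ZMod 4) : ℂ :=
  (if x = gstar then (1+Complex.I)/2 else 0)
    + (if x = -gstar then (1-Complex.I)/2 else 0)
    + (if x ∈ Sb.erase gstar then 1 else 0)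
    + (if -x ∈ Sb.erase gstar then 1 else 0)

variable (hΩ : ∀ g ∈ Sb, inOmega g) (hg : gstar ∈ Sb)

include hΩ hg

lemma wgt_gstar : wgt Sb gstar gstar = (1+Complex.I)/2 := by
  have A : gstar ≠ -gstar := inOmega_ne_neg (hΩ _ hg) (hΩ _ hg)
  have B : gstar ∉ Sb.erase gstar := Finset.notMem_erase _ _
  have C : -gstar ∉ Sb.erase gstar := fun hmem =>
    inOmega_ne_neg (hΩ _ (Finset.mem_of_mem_erase hmem)) (hΩ _ hg) rfl
  unfold wgt
  rw [if_pos rfl, if_neg A, if_neg B, if_neg C]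
  ring

lemma wgt_neg_gstar : wgt Sb gstar (-gstar) = (1-Complex.I)/2 := by
  have A : ¬(-gstar = gstar) := fun hc =>
    inOmega_ne_neg (hΩ _ hg) (hΩ _ hg) hc.symm
  have B : -gstar ∉ Sb.erase gstar := fun hmem =>
    inOmega_ne_neg (hΩ _ (Finset.mem_of_mem_erase hmem)) (hΩ _ hg) rfl
  have C : -(-gstar) ∉ Sb.erase gstar := by
    rw [neg_neg]; exact Finset.notMem_erase _ _
  unfold wgt
  rw [if_neg A, if_pos rfl, if_neg B, if_neg C]
  ring

lemma wgt_mem (g : Fin n → ZMod 4) (hmem : g ∈ Sb.erase gstar) :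
    wgt Sb gstar g = 1 := by
  have hgΩ := hΩ _ (Finset.mem_of_mem_erase hmem)
  have A : g ≠ gstar := Finset.ne_of_mem_erase hmem
  have B : g ≠ -gstar := inOmega_ne_neg hgΩ (hΩ _ hg)
  have C : -g ∉ Sb.erase gstar := fun hm =>
    inOmega_ne_neg (hΩ _ (Finset.mem_of_mem_erase hm)) hgΩ rfl
  unfold wgt
  rw [if_neg A, if_neg B, if_pos hmem, if_neg C]
  ring

lemma wgt_neg_mem (g : Fin n → ZMod 4) (hmem : g ∈ Sb.erase gstar) :
    wgt Sb gstar (-g) = 1 := by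
  have hgΩ := hΩ _ (Finset.mem_of_mem_erase hmem)
  have A : ¬(-g = gstar) := fun hc =>
    inOmega_ne_neg (hΩ _ hg) hgΩ (by rw [← hc])
  have B : ¬(-g = -gstar) := fun hc =>
    Finset.ne_of_mem_erase hmem (neg_injective hc)
  have C : -g ∉ Sb.erase gstar := fun hm =>
    inOmega_ne_neg (hΩ _ (Finset.mem_of_mem_erase hm)) hgΩ rfl
  have D : -(-g) ∈ Sb.erase gstar := by rw [neg_neg]; exact hmem
  unfold wgt
  rw [if_neg A, if_neg B, if_neg C, if_pos D]
  ring

lemma wgt_cases (x : Fin n → ZMod 4) :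
    wgt Sb gstar x = 0 ∨ wgt Sb gstar x = 1 ∨
      (x = gstar ∧ wgt Sb gstar x = (1+Complex.I)/2) ∨
      (x = -gstar ∧ wgt Sb gstar x = (1-Complex.I)/2) := by
  by_cases h1 : x = gstar
  · exact Or.inr (Or.inr (Or.inl ⟨h1, by rw [h1]; exact wgt_gstar Sb gstar hΩ hg⟩))
  by_cases h2 : x = -gstar
  · exact Or.inr (Or.inr (Or.inr ⟨h2, by rw [h2]; exact wgt_neg_gstar Sb gstar hΩ hg⟩))
  by_cases h3 : x ∈ Sb.erase gstar
  · exact Or.inr (Or.inl (wgt_mem Sb gstar hΩ hg x h3))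
  by_cases h4 : -x ∈ Sb.erase gstar
  · have := wgt_neg_mem Sb gstar hΩ hg (-x) h4
    rw [neg_neg] at this
    exact Or.inr (Or.inl this)
  · left
    unfold wgt
    rw [if_neg h1, if_neg h2, if_neg h3, if_neg h4]
    ring

lemma wgt_supp {x : Fin n → ZMod 4} (hx : wgt Sb gstar x ≠ 0) :
    par x ≠ 0 := by
  by_cases h1 : x = gstar
  · rw [h1]; exact inOmega_par_ne_zero (hΩ _ hg)
  by_cases h2 : x = -gstar
  · rw [h2, par_neg]; exact inOmega_par_ne_zero (hΩ _ hg)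
  by_cases h3 : x ∈ Sb.erase gstar
  · exact inOmega_par_ne_zero (hΩ _ (Finset.mem_of_mem_erase h3))
  by_cases h4 : -x ∈ Sb.erase gstar
  · rw [← par_neg]
    exact inOmega_par_ne_zero (hΩ _ (Finset.mem_of_mem_erase h4))
  · exfalso
    apply hx
    unfold wgt
    rw [if_neg h1, if_neg h2, if_neg h3, if_neg h4]
    ring

lemma wgt_supp_par {x : Fin n → ZMod 4} (hx : wgt Sb gstar x ≠ 0) :
    ∃ g ∈ Sb, par x = par g := by
  by_cases h1 : x = gstar
  · exact ⟨gstar, hg, by rw [h1]⟩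
  by_cases h2 : x = -gstar
  · exact ⟨gstar, hg, by rw [h2, par_neg]⟩
  by_cases h3 : x ∈ Sb.erase gstar
  · exact ⟨x, Finset.mem_of_mem_erase h3, rfl⟩
  by_cases h4 : -x ∈ Sb.erase gstar
  · exact ⟨-x, Finset.mem_of_mem_erase h4, (par_neg x).symm⟩
  · exfalso
    apply hx
    unfold wgt
    rw [if_neg h1, if_neg h2, if_neg h3, if_neg h4]
    ring

omit hΩ hg

lemma wgt_re_nonneg (x : Fin n → ZMod 4) : 0 ≤ (wgt Sb gstar x).re := by
  unfold wgt
  simp only [Complex.add_re]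
  have h1 : (0:ℝ) ≤ (if x = gstar then (1+Complex.I)/2 else 0).re := by
    split <;> norm_num [Complex.div_re]
  have h2 : (0:ℝ) ≤ (if x = -gstar then (1-Complex.I)/2 else 0).re := by
    split <;> norm_num [Complex.div_re]
  have h3 : (0:ℝ) ≤ (if x ∈ Sb.erase gstar then (1:ℂ) else 0).re := by
    split <;> norm_num
  have h4 : (0:ℝ) ≤ (if -x ∈ Sb.erase gstar then (1:ℂ) else 0).re := by
    split <;> norm_num
  linarith

lemma wgt_conj (x : Fin n → ZMod 4) :
    wgt Sb gstar (-x) = (starRingEnd ℂ) (wgt Sb gstar x) := by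
  unfold wgt
  simp only [map_add, apply_ite (starRingEnd ℂ), map_div₀, map_add, map_sub,
    map_one, map_zero, map_neg, Complex.conj_I, map_ofNat, neg_neg, neg_eq_iff_eq_neg,
    neg_inj, sub_eq_add_neg, neg_neg]
  ring

lemma wgt_total (hg : gstar ∈ Sb) :
    ∑ x : Fin n → ZMod 4, wgt Sb gstar x = 2 * (Sb.card : ℂ) - 1 := by
  unfold wgt
  rw [Finset.sum_add_distrib, Finset.sum_add_distrib, Finset.sum_add_distrib]
  have e1 : ∑ x : Fin n → ZMod 4, (if x = gstar then (1+Complex.I)/2 else 0)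
      = (1+Complex.I)/2 := by
    rw [Finset.sum_ite_eq' Finset.univ gstar (fun _ => (1+Complex.I)/2)]
    simp
  have e2 : ∑ x : Fin n → ZMod 4, (if x = -gstar then (1-Complex.I)/2 else 0)
      = (1-Complex.I)/2 := by
    rw [Finset.sum_ite_eq' Finset.univ (-gstar) (fun _ => (1-Complex.I)/2)]
    simp
  have h1 : 1 ≤ Sb.card := Finset.card_pos.mpr ⟨gstar, hg⟩
  have e3 : ∑ x : Fin n → ZMod 4, (if x ∈ Sb.erase gstar then (1:ℂ) else 0)
      = ((Sb.card : ℂ) - 1) := by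
    rw [Finset.sum_ite_mem, Finset.univ_inter, Finset.sum_const,
      Finset.card_erase_of_mem hg, nsmul_eq_mul, Nat.cast_sub h1]
    push_cast
    ring
  have e4 : ∑ x : Fin n → ZMod 4, (if -x ∈ Sb.erase gstar then (1:ℂ) else 0)
      = ((Sb.card : ℂ) - 1) := by
    rw [← e3]
    exact Fintype.sum_equiv (Equiv.neg _) _ _ (fun x => by simp)
  rw [e1, e2, e3, e4]
  ring

end Weights

/- ### expressing sigOdd via the weights -/

lemma neg_ne_zero_aux {n : ℕ} (hI : (1:ℂ) - Complex.I ≠ 0) : n = n := rfl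

lemma one_sub_I_ne : (1:ℂ) - Complex.I ≠ 0 := by
  intro h
  have := congrArg Complex.im h
  simp at this

lemma gstar_term (d : ZMod 4) :
    (ipow d + ipow (3 - d)) / (1 - Complex.I)
      = (1+Complex.I)/2 * ipow d + (1-Complex.I)/2 * ipow (-d) := by
  have h3 : ipow (3 - d) = -Complex.I * ipow (-d) := by
    rw [show (3 - d : ZMod 4) = 3 + (-d) by ring, ipow_add, ipow_three]
  rw [h3, div_eq_iff one_sub_I_ne]
  ring_nf
  rw [Complex.I_sq]
  ring

lemma sigOdd_eq_wgt {n : ℕ} (Sb : Finset (Fin n → ZMod 4))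
    (gstar : Fin n → ZMod 4) (u : Fin n → ZMod 4) :
    sigOdd Sb gstar u = ∑ x : Fin n → ZMod 4, wgt Sb gstar x * ipow (dot4 u x) := by
  unfold sigOdd wgt
  have expand : ∑ x : Fin n → ZMod 4,
      ((if x = gstar then (1+Complex.I)/2 else 0)
        + (if x = -gstar then (1-Complex.I)/2 else 0)
        + (if x ∈ Sb.erase gstar then (1:ℂ) else 0)
        + (if -x ∈ Sb.erase gstar then (1:ℂ) else 0)) * ipow (dot4 u x)
      = (∑ x : Fin n → ZMod 4, (if x = gstar then (1+Complex.I)/2 * ipow (dot4 u x) else 0))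
        + (∑ x : Fin n → ZMod 4, (if x = -gstar then (1-Complex.I)/2 * ipow (dot4 u x) else 0))
        + (∑ x : Fin n → ZMod 4, (if x ∈ Sb.erase gstar then ipow (dot4 u x) else 0))
        + (∑ x : Fin n → ZMod 4, (if -x ∈ Sb.erase gstar then ipow (dot4 u x) else 0)) := by
    rw [← Finset.sum_add_distrib, ← Finset.sum_add_distrib, ← Finset.sum_add_distrib]
    refine Finset.sum_congr rfl fun x _ => ?_
    rw [add_mul, add_mul, add_mul, ite_mul, ite_mul, ite_mul, ite_mul,
      zero_mul, one_mul]
  rw [expand]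
  rw [Finset.sum_ite_eq' Finset.univ gstar, if_pos (Finset.mem_univ _)]
  rw [Finset.sum_ite_eq' Finset.univ (-gstar), if_pos (Finset.mem_univ _)]
  rw [Finset.sum_ite_mem, Finset.univ_inter]
  have e4 : ∑ x : Fin n → ZMod 4, (if -x ∈ Sb.erase gstar then ipow (dot4 u x) else 0)
      = ∑ g ∈ Sb.erase gstar, ipow (-(dot4 u g)) := by
    have step : ∑ x : Fin n → ZMod 4, (if -x ∈ Sb.erase gstar then ipow (dot4 u x) else 0)
        = ∑ y : Fin n → ZMod 4, (if y ∈ Sb.erase gstar then ipow (dot4 u (-y)) else 0) := by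
      refine Fintype.sum_equiv (Equiv.neg _) _ _ fun x => ?_
      simp only [Equiv.neg_apply, neg_neg]
    rw [step, Finset.sum_ite_mem, Finset.univ_inter]
    exact Finset.sum_congr rfl fun g _ => by rw [dot4_neg_right]
  rw [e4, gstar_term, dot4_neg_right, Finset.sum_add_distrib]
  ring

/- ### moment computations -/

lemma moment2 {n : ℕ} (v : (Fin n → ZMod 4) → ℂ) :
    ∑ u ∈ Finset.univ.filter (allEven (n := n)),
        (∑ x : Fin n → ZMod 4, v x * ipow (dot4 u x))^2
      = 2^n * ∑ x : Fin n → ZMod 4, ∑ y : Fin n → ZMod 4,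
          (if allEven (x+y) then v x * v y else 0) := by
  have expand : ∀ u : Fin n → ZMod 4,
      (∑ x : Fin n → ZMod 4, v x * ipow (dot4 u x))^2
        = ∑ x : Fin n → ZMod 4, ∑ y : Fin n → ZMod 4,
            (v x * v y) * ipow (dot4 u (x+y)) := by
    intro u
    rw [sq, Finset.sum_mul_sum]
    exact Finset.sum_congr rfl fun x _ => Finset.sum_congr rfl fun y _ => by
      rw [← chi_mul]; ring
  calc ∑ u ∈ Finset.univ.filter (allEven (n := n)),
        (∑ x : Fin n → ZMod 4, v x * ipow (dot4 u x))^2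
      = ∑ u ∈ Finset.univ.filter (allEven (n := n)), ∑ x : Fin n → ZMod 4,
          ∑ y : Fin n → ZMod 4, (v x * v y) * ipow (dot4 u (x+y)) :=
        Finset.sum_congr rfl fun u _ => expand u
    _ = ∑ x : Fin n → ZMod 4, ∑ y : Fin n → ZMod 4,
          ∑ u ∈ Finset.univ.filter (allEven (n := n)),
            (v x * v y) * ipow (dot4 u (x+y)) := by
        rw [Finset.sum_comm]
        exact Finset.sum_congr rfl fun x _ => Finset.sum_comm
    _ = ∑ x : Fin n → ZMod 4, ∑ y : Fin n → ZMod 4,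
          (v x * v y) * (if allEven (x+y) then (2:ℂ)^n else 0) := by
        refine Finset.sum_congr rfl fun x _ => Finset.sum_congr rfl fun y _ => ?_
        rw [← Finset.mul_sum, char_sum_evenset]
    _ = 2^n * ∑ x : Fin n → ZMod 4, ∑ y : Fin n → ZMod 4,
          (if allEven (x+y) then v x * v y else 0) := by
        rw [Finset.mul_sum]
        refine Finset.sum_congr rfl fun x _ => ?_
        rw [Finset.mul_sum]
        refine Finset.sum_congr rfl fun y _ => ?_
        by_cases h : allEven (x+y) <;> simp [h] <;> ring

lemma moment3 {n : ℕ} (v : (Fin n → ZMod 4) → ℂ) :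
    ∑ u : Fin n → ZMod 4, (∑ x : Fin n → ZMod 4, v x * ipow (dot4 u x))^3
      = 4^n * ∑ x : Fin n → ZMod 4, ∑ y : Fin n → ZMod 4,
          v x * v y * v (-(x+y)) := by
  have expand : ∀ u : Fin n → ZMod 4,
      (∑ x : Fin n → ZMod 4, v x * ipow (dot4 u x))^3
        = ∑ x : Fin n → ZMod 4, ∑ y : Fin n → ZMod 4, ∑ z : Fin n → ZMod 4,
            (v x * v y * v z) * ipow (dot4 u (x+y+z)) := by
    intro u
    have h2 : (∑ x : Fin n → ZMod 4, v x * ipow (dot4 u x))^2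
        = ∑ x : Fin n → ZMod 4, ∑ y : Fin n → ZMod 4,
            (v x * v y) * ipow (dot4 u (x+y)) := by
      rw [sq, Finset.sum_mul_sum]
      exact Finset.sum_congr rfl fun x _ => Finset.sum_congr rfl fun y _ => by
        rw [← chi_mul]; ring
    rw [pow_succ, h2, Finset.sum_mul]
    refine Finset.sum_congr rfl fun x _ => ?_
    rw [Finset.sum_mul]
    refine Finset.sum_congr rfl fun y _ => ?_
    rw [Finset.mul_sum]
    refine Finset.sum_congr rfl fun z _ => ?_
    rw [show ((v x * v y) * ipow (dot4 u (x+y))) * (v z * ipow (dot4 u z))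
      = (v x * v y * v z) * (ipow (dot4 u (x+y)) * ipow (dot4 u z)) by ring, chi_mul]
  calc ∑ u : Fin n → ZMod 4, (∑ x : Fin n → ZMod 4, v x * ipow (dot4 u x))^3
      = ∑ u : Fin n → ZMod 4, ∑ x : Fin n → ZMod 4, ∑ y : Fin n → ZMod 4,
          ∑ z : Fin n → ZMod 4, (v x * v y * v z) * ipow (dot4 u (x+y+z)) :=
        Finset.sum_congr rfl fun u _ => expand u
    _ = ∑ x : Fin n → ZMod 4, ∑ y : Fin n → ZMod 4, ∑ z : Fin n → ZMod 4,
          ∑ u : Fin n → ZMod 4, (v x * v y * v z) * ipow (dot4 u (x+y+z)) := by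
        rw [Finset.sum_comm]
        refine Finset.sum_congr rfl fun x _ => ?_
        rw [Finset.sum_comm]
        exact Finset.sum_congr rfl fun y _ => Finset.sum_comm
    _ = ∑ x : Fin n → ZMod 4, ∑ y : Fin n → ZMod 4, ∑ z : Fin n → ZMod 4,
          (v x * v y * v z) * (if x+y+z = 0 then (4:ℂ)^n else 0) := by
        refine Finset.sum_congr rfl fun x _ => Finset.sum_congr rfl fun y _ =>
          Finset.sum_congr rfl fun z _ => ?_
        rw [← Finset.mul_sum, char_sum_full]
    _ = ∑ x : Fin n → ZMod 4, ∑ y : Fin n → ZMod 4, ∑ z : Fin n → ZMod 4,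
          (if z = -(x+y) then (4:ℂ)^n * (v x * v y * v z) else 0) := by
        refine Finset.sum_congr rfl fun x _ => Finset.sum_congr rfl fun y _ =>
          Finset.sum_congr rfl fun z _ => ?_
        have hiff : x+y+z = 0 ↔ z = -(x+y) := by
          constructor
          · intro h; linear_combination h - (x+y)
          · intro h; rw [h]; ring
        by_cases h : z = -(x+y)
        · rw [if_pos h, if_pos (hiff.mpr h)]; ring
        · rw [if_neg h, if_neg (fun hc => h (hiff.mp hc))]; ring
    _ = 4^n * ∑ x : Fin n → ZMod 4, ∑ y : Fin n → ZMod 4, v x * v y * v (-(x+y)) := by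
        rw [Finset.mul_sum]
        refine Finset.sum_congr rfl fun x _ => ?_
        rw [Finset.mul_sum]
        refine Finset.sum_congr rfl fun y _ => ?_
        rw [Finset.sum_ite_eq' Finset.univ (-(x+y)), if_pos (Finset.mem_univ _)]

/- ### parity-class bookkeeping -/

lemma z2_add_eq_zero : ∀ a b : ZMod 2, a + b = 0 ↔ b = a := by decide

lemma par_sum_cond {n : ℕ} (x y : Fin n → ZMod 4) :
    allEven (x+y) ↔ par y = par x := by
  rw [allEven_iff_par, par_add]
  constructor
  · intro h
    funext i
    exact (z2_add_eq_zero _ _).mp (congrFun h i)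
  · intro h
    rw [h]
    exact par_self_add x

lemma par_neg_sum_zero {n : ℕ} {x y : Fin n → ZMod 4} (h : par y = par x) :
    par (-(x+y)) = 0 := by
  rw [par_neg, par_add, h]
  exact par_self_add x

section ClassSums

variable {n : ℕ} (Sb : Finset (Fin n → ZMod 4)) (gstar : Fin n → ZMod 4)

/-- total weight (real part) in each parity class -/
noncomputable def acf (c : Fin n → ZMod 2) : ℝ :=
  ∑ x ∈ Finset.univ.filter (fun x => par x = c), (wgt Sb gstar x).re

lemma acf_nonneg (c : Fin n → ZMod 2) : 0 ≤ acf Sb gstar c :=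
  Finset.sum_nonneg fun x _ => wgt_re_nonneg Sb gstar x

lemma classsum_eq (c : Fin n → ZMod 2) :
    ∑ x ∈ Finset.univ.filter (fun x => par x = c), wgt Sb gstar x
      = ((acf Sb gstar c : ℝ) : ℂ) := by
  set T := ∑ x ∈ Finset.univ.filter (fun x => par x = c), wgt Sb gstar x with hT
  have hconj : (starRingEnd ℂ) T = T := by
    rw [hT, map_sum]
    rw [Finset.sum_filter, Finset.sum_filter]
    have : ∀ x : Fin n → ZMod 4,
        (if par x = c then (starRingEnd ℂ) (wgt Sb gstar x) else 0)
          = (if par (-x) = c then wgt Sb gstar (-x) else 0) := by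
      intro x
      rw [par_neg, wgt_conj]
    rw [Finset.sum_congr rfl fun x _ => this x]
    refine Fintype.sum_equiv (Equiv.neg _) _ _ fun x => ?_
    simp only [Equiv.neg_apply, neg_neg]
  have hre : ((T.re : ℝ) : ℂ) = T := Complex.conj_eq_iff_re.mp hconj
  have hreval : T.re = acf Sb gstar c := by
    rw [hT, Complex.re_sum]
    rfl
  rw [← hreval, hre]

lemma acf_total (hg : gstar ∈ Sb) :
    ∑ c : Fin n → ZMod 2, acf Sb gstar c = 2*(Sb.card:ℝ) - 1 := by
  have h1 : ∑ c : Fin n → ZMod 2, acf Sb gstar c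
      = ∑ x : Fin n → ZMod 4, (wgt Sb gstar x).re :=
    Finset.sum_fiberwise Finset.univ par (fun x => (wgt Sb gstar x).re)
  rw [h1, ← Complex.re_sum, wgt_total Sb gstar hg]
  simp

lemma re_total (hg : gstar ∈ Sb) :
    ∑ x : Fin n → ZMod 4, (wgt Sb gstar x).re = 2*(Sb.card:ℝ) - 1 := by
  rw [← Complex.re_sum, wgt_total Sb gstar hg]
  simp

/-- the filtered second moment in class form -/
lemma Q2_eq :
    ∑ x : Fin n → ZMod 4, ∑ y : Fin n → ZMod 4,
        (if allEven (x+y) then wgt Sb gstar x * wgt Sb gstar y else 0)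
      = (((∑ c : Fin n → ZMod 2, acf Sb gstar c ^ 2 : ℝ)) : ℂ) := by
  have inner : ∀ x : Fin n → ZMod 4,
      ∑ y : Fin n → ZMod 4, (if allEven (x+y) then wgt Sb gstar x * wgt Sb gstar y else 0)
        = wgt Sb gstar x * ((acf Sb gstar (par x) : ℝ) : ℂ) := by
    intro x
    rw [← classsum_eq Sb gstar (par x), Finset.sum_filter, Finset.mul_sum]
    refine Finset.sum_congr rfl fun y _ => ?_
    simp only [par_sum_cond]
    by_cases h : par y = par x
    · rw [if_pos h, if_pos h]
    · rw [if_neg h, if_neg h, mul_zero]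
  rw [Finset.sum_congr rfl fun x _ => inner x]
  have fib : ∑ x : Fin n → ZMod 4, wgt Sb gstar x * ((acf Sb gstar (par x) : ℝ) : ℂ)
      = ∑ c : Fin n → ZMod 2, ∑ x ∈ Finset.univ.filter (fun x => par x = c),
          wgt Sb gstar x * ((acf Sb gstar (par x) : ℝ) : ℂ) :=
    (Finset.sum_fiberwise Finset.univ par _).symm
  rw [fib]
  rw [Complex.ofReal_sum]
  refine Finset.sum_congr rfl fun c _ => ?_
  have : ∑ x ∈ Finset.univ.filter (fun x => par x = c),
      wgt Sb gstar x * ((acf Sb gstar (par x) : ℝ) : ℂ)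
        = ∑ x ∈ Finset.univ.filter (fun x => par x = c),
          wgt Sb gstar x * ((acf Sb gstar c : ℝ) : ℂ) := by
    refine Finset.sum_congr rfl fun x hx => ?_
    rw [(Finset.mem_filter.mp hx).2]
  rw [this, ← Finset.sum_mul, classsum_eq Sb gstar c]
  rw [← Complex.ofReal_mul, sq]

/-- real version of the class-diagonal second moment -/
lemma Q2_re_eq :
    ∑ x : Fin n → ZMod 4, ∑ y : Fin n → ZMod 4,
        (if par x = par y then (wgt Sb gstar x).re * (wgt Sb gstar y).re else 0)
      = ∑ c : Fin n → ZMod 2, acf Sb gstar c ^ 2 := by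
  have inner : ∀ x : Fin n → ZMod 4,
      ∑ y : Fin n → ZMod 4, (if par x = par y then (wgt Sb gstar x).re * (wgt Sb gstar y).re else 0)
        = (wgt Sb gstar x).re * acf Sb gstar (par x) := by
    intro x
    rw [acf, Finset.sum_filter, Finset.mul_sum]
    refine Finset.sum_congr rfl fun y _ => ?_
    by_cases h : par y = par x
    · rw [if_pos h.symm, if_pos h]
    · rw [if_neg (fun hc => h hc.symm), if_neg h, mul_zero]
  rw [Finset.sum_congr rfl fun x _ => inner x]
  have fib : ∑ x : Fin n → ZMod 4, (wgt Sb gstar x).re * acf Sb gstar (par x)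
      = ∑ c : Fin n → ZMod 2, ∑ x ∈ Finset.univ.filter (fun x => par x = c),
          (wgt Sb gstar x).re * acf Sb gstar (par x) :=
    (Finset.sum_fiberwise Finset.univ par _).symm
  rw [fib]
  refine Finset.sum_congr rfl fun c _ => ?_
  have : ∑ x ∈ Finset.univ.filter (fun x => par x = c),
      (wgt Sb gstar x).re * acf Sb gstar (par x)
        = ∑ x ∈ Finset.univ.filter (fun x => par x = c),
          (wgt Sb gstar x).re * acf Sb gstar c := by
    refine Finset.sum_congr rfl fun x hx => ?_
    rw [(Finset.mem_filter.mp hx).2]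
  rw [this, ← Finset.sum_mul, ← acf, sq]

end ClassSums

/- ### third moment: reality and pointwise bound -/

section Q3

variable {n : ℕ} (Sb : Finset (Fin n → ZMod 4)) (gstar : Fin n → ZMod 4)

lemma Q3_real :
    (((∑ x : Fin n → ZMod 4, ∑ y : Fin n → ZMod 4,
        wgt Sb gstar x * wgt Sb gstar y * wgt Sb gstar (-(x+y))).re : ℝ) : ℂ)
      = ∑ x : Fin n → ZMod 4, ∑ y : Fin n → ZMod 4,
          wgt Sb gstar x * wgt Sb gstar y * wgt Sb gstar (-(x+y)) := by
  set Q := ∑ x : Fin n → ZMod 4, ∑ y : Fin n → ZMod 4,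
      wgt Sb gstar x * wgt Sb gstar y * wgt Sb gstar (-(x+y)) with hQ
  refine Complex.conj_eq_iff_re.mp ?_
  rw [hQ, map_sum]
  have step1 : ∀ x : Fin n → ZMod 4,
      (starRingEnd ℂ) (∑ y : Fin n → ZMod 4,
          wgt Sb gstar x * wgt Sb gstar y * wgt Sb gstar (-(x+y)))
        = ∑ y : Fin n → ZMod 4,
            wgt Sb gstar (-x) * wgt Sb gstar (-y) * wgt Sb gstar (x+y) := by
    intro x
    rw [map_sum]
    refine Finset.sum_congr rfl fun y _ => ?_
    rw [map_mul, map_mul, ← wgt_conj, ← wgt_conj, ← wgt_conj, neg_neg]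
  rw [Finset.sum_congr rfl fun x _ => step1 x]
  have step2 : ∑ x : Fin n → ZMod 4, ∑ y : Fin n → ZMod 4,
      wgt Sb gstar (-x) * wgt Sb gstar (-y) * wgt Sb gstar (x+y)
        = ∑ x : Fin n → ZMod 4, ∑ y : Fin n → ZMod 4,
            wgt Sb gstar x * wgt Sb gstar y * wgt Sb gstar (-(x+y)) := by
    refine Fintype.sum_equiv (Equiv.neg _) _ _ fun x => ?_
    refine Fintype.sum_equiv (Equiv.neg _) _ _ fun y => ?_
    simp only [Equiv.neg_apply]
    rw [show -x + -y = -(x+y) by ring, neg_neg]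
  rw [step2]

variable (hΩ : ∀ g ∈ Sb, inOmega g) (hg : gstar ∈ Sb)

include hΩ hg

lemma wgt_pointwise (x y : Fin n → ZMod 4) :
    (wgt Sb gstar x * wgt Sb gstar y * wgt Sb gstar (-(x+y))).re
      ≤ (if par x = par y then 0 else (wgt Sb gstar x).re * (wgt Sb gstar y).re) := by
  by_cases hpar : par x = par y
  · rw [if_pos hpar]
    have hz : wgt Sb gstar (-(x+y)) = 0 := by
      by_contra hc
      exact wgt_supp Sb gstar hΩ hg hc (par_neg_sum_zero hpar.symm)
    rw [hz, mul_zero]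
    norm_num
  rw [if_neg hpar]
  have hRHS : 0 ≤ (wgt Sb gstar x).re * (wgt Sb gstar y).re :=
    mul_nonneg (wgt_re_nonneg Sb gstar x) (wgt_re_nonneg Sb gstar y)
  rcases wgt_cases Sb gstar hΩ hg x with hx | hx | ⟨hxg, hx⟩ | ⟨hxg, hx⟩ <;>
    [skip; skip; skip; skip]
  · rw [hx]; simpa using hRHS
  all_goals rcases wgt_cases Sb gstar hΩ hg y with hy | hy | ⟨hyg, hy⟩ | ⟨hyg, hy⟩
  -- x generic (wgt = 1)
  · rw [hy]; simpa using hRHS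
  · rcases wgt_cases Sb gstar hΩ hg (-(x+y)) with hz | hz | ⟨hzg, hz⟩ | ⟨hzg, hz⟩
    · rw [hz]; simpa using hRHS
    · rw [hx, hy, hz]; norm_num
    · rw [hx, hy, hz]; norm_num [Complex.div_re]
    · rw [hx, hy, hz]; norm_num [Complex.div_re]
  · -- y = gstar
    rcases wgt_cases Sb gstar hΩ hg (-(x+y)) with hz | hz | ⟨hzg, hz⟩ | ⟨hzg, hz⟩
    · rw [hz]; simpa using hRHS
    · rw [hx, hy, hz]; norm_num [Complex.div_re]
    · -- x generic, y = gstar, z = gstar : then par x = 0, contradiction with wgt x = 1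
      exfalso
      have hxval : x = -gstar - gstar := by
        have := hzg
        rw [hyg] at this
        linear_combination -this - gstar - gstar
      have hparx : par x = 0 := by
        rw [hxval]
        simp only [sub_eq_add_neg, par_add, par_neg]
        exact par_self_add gstar
      exact wgt_supp Sb gstar hΩ hg (by rw [hx]; norm_num) hparx
    · exfalso
      have hxval : x = gstar - gstar := by
        have := hzg
        rw [hyg] at this
        linear_combination -this - gstar + gstar
      have hparx : par x = 0 := by
        rw [hxval]
        simp only [sub_eq_add_neg, par_add, par_neg]
        exact par_self_add gstar
      exact wgt_supp Sb gstar hΩ hg (by rw [hx]; norm_num) hparx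
  · -- y = -gstar
    rcases wgt_cases Sb gstar hΩ hg (-(x+y)) with hz | hz | ⟨hzg, hz⟩ | ⟨hzg, hz⟩
    · rw [hz]; simpa using hRHS
    · rw [hx, hy, hz]; norm_num [Complex.div_re]
    · exfalso
      have hxval : x = -gstar + gstar := by
        have := hzg
        rw [hyg] at this
        linear_combination -this - gstar + gstar
      have hparx : par x = 0 := by
        rw [hxval]
        simp only [sub_eq_add_neg, par_add, par_neg]
        exact par_self_add gstar
      exact wgt_supp Sb gstar hΩ hg (by rw [hx]; norm_num) hparx
    · exfalso
      have hxval : x = gstar + gstar := by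
        have := hzg
        rw [hyg] at this
        linear_combination -this + gstar + gstar
      have hparx : par x = 0 := by
        rw [hxval]
        simp only [sub_eq_add_neg, par_add, par_neg]
        exact par_self_add gstar
      exact wgt_supp Sb gstar hΩ hg (by rw [hx]; norm_num) hparx
  -- x = gstar
  · rw [hy]; simpa using hRHS
  · rcases wgt_cases Sb gstar hΩ hg (-(x+y)) with hz | hz | ⟨hzg, hz⟩ | ⟨hzg, hz⟩
    · rw [hz]; simpa using hRHS
    · rw [hx, hy, hz]; norm_num [Complex.div_re]
    · exfalso
      have hyval : y = -gstar - gstar := by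
        have := hzg
        rw [hxg] at this
        linear_combination -this - gstar - gstar
      have hpary : par y = 0 := by
        rw [hyval]
        simp only [sub_eq_add_neg, par_add, par_neg]
        exact par_self_add gstar
      exact wgt_supp Sb gstar hΩ hg (by rw [hy]; norm_num) hpary
    · exfalso
      have hyval : y = gstar - gstar := by
        have := hzg
        rw [hxg] at this
        linear_combination -this - gstar + gstar
      have hpary : par y = 0 := by
        rw [hyval]
        simp only [sub_eq_add_neg, par_add, par_neg]
        exact par_self_add gstar
      exact wgt_supp Sb gstar hΩ hg (by rw [hy]; norm_num) hpary
  · exact absurd (by rw [hxg, hyg]) hpar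
  · exact absurd (by rw [hxg, hyg, par_neg]) hpar
  -- x = -gstar
  · rw [hy]; simpa using hRHS
  · rcases wgt_cases Sb gstar hΩ hg (-(x+y)) with hz | hz | ⟨hzg, hz⟩ | ⟨hzg, hz⟩
    · rw [hz]; simpa using hRHS
    · rw [hx, hy, hz]; norm_num [Complex.div_re]
    · exfalso
      have hyval : y = -gstar + gstar := by
        have := hzg
        rw [hxg] at this
        linear_combination -this - gstar + gstar
      have hpary : par y = 0 := by
        rw [hyval]
        simp only [sub_eq_add_neg, par_add, par_neg]
        exact par_self_add gstar
      exact wgt_supp Sb gstar hΩ hg (by rw [hy]; norm_num) hpary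
    · exfalso
      have hyval : y = gstar + gstar := by
        have := hzg
        rw [hxg] at this
        linear_combination -this + gstar + gstar
      have hpary : par y = 0 := by
        rw [hyval]
        simp only [sub_eq_add_neg, par_add, par_neg]
        exact par_self_add gstar
      exact wgt_supp Sb gstar hΩ hg (by rw [hy]; norm_num) hpary
  · exact absurd (by rw [hxg, hyg, par_neg]) hpar
  · exact absurd (by rw [hxg, hyg]) hpar

end Q3


/-- Theorem 3: F_{odd,3} ≤ 3·2^{2n}(2(v-s)-1)² for any S̄ ⊆ Ω with distinguished
element g*, with equality if and only if S̄ is even. -/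
theorem theorem_three {n : ℕ} (Sb : Finset (Fin n → ZMod 4))
    (hΩ : ∀ g ∈ Sb, inOmega g)
    (gstar : Fin n → ZMod 4) (hg : gstar ∈ Sb) (hcard : 1 ≤ Sb.card) :
    (3 * 2 ^ n *
        (∑ u ∈ Finset.univ.filter (allEven (n := n)), (sigOdd Sb gstar u) ^ 2) +
      (∑ u : Fin n → ZMod 4, (sigOdd Sb gstar u) ^ 3)
        ≤ 3 * 2 ^ (2 * n) * (2 * (Sb.card : ℂ) - 1) ^ 2) ∧
    ((3 * 2 ^ n *
        (∑ u ∈ Finset.univ.filter (allEven (n := n)), (sigOdd Sb gstar u) ^ 2) +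
      (∑ u : Fin n → ZMod 4, (sigOdd Sb gstar u) ^ 3)
        = 3 * 2 ^ (2 * n) * (2 * (Sb.card : ℂ) - 1) ^ 2)
      ↔ ∀ g ∈ Sb, ∀ g' ∈ Sb, allEven (g + g')) := by
  -- abbreviations
  set W : (Fin n → ZMod 4) → ℂ := wgt Sb gstar with hW
  set Sr : ℝ := 2 * (Sb.card : ℝ) - 1 with hSr
  set q2 : ℝ := ∑ c : Fin n → ZMod 2, acf Sb gstar c ^ 2 with hq2
  set Q3C : ℂ := ∑ x : Fin n → ZMod 4, ∑ y : Fin n → ZMod 4,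
      W x * W y * W (-(x+y)) with hQ3C
  set q3 : ℝ := Q3C.re with hq3def
  -- the two moments
  have hsig2 : ∑ u ∈ Finset.univ.filter (allEven (n := n)), (sigOdd Sb gstar u) ^ 2
      = 2^n * ∑ x : Fin n → ZMod 4, ∑ y : Fin n → ZMod 4,
          (if allEven (x+y) then W x * W y else 0) := by
    rw [Finset.sum_congr rfl fun u _ => by rw [sigOdd_eq_wgt Sb gstar u]]
    exact moment2 W
  have hsig3 : ∑ u : Fin n → ZMod 4, (sigOdd Sb gstar u) ^ 3 = 4^n * Q3C := by
    rw [Finset.sum_congr rfl fun u _ => by rw [sigOdd_eq_wgt Sb gstar u]]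
    exact moment3 W
  have hQ2 : ∑ x : Fin n → ZMod 4, ∑ y : Fin n → ZMod 4,
      (if allEven (x+y) then W x * W y else 0) = ((q2 : ℝ) : ℂ) := Q2_eq Sb gstar
  have hQ3 : Q3C = ((q3 : ℝ) : ℂ) := (Q3_real Sb gstar).symm
  -- complex LHS and RHS as real casts
  have hLHSeq : 3 * 2 ^ n *
      (∑ u ∈ Finset.univ.filter (allEven (n := n)), (sigOdd Sb gstar u) ^ 2) +
      (∑ u : Fin n → ZMod 4, (sigOdd Sb gstar u) ^ 3)
      = (((3 * 2^n * (2^n * q2) + 4^n * q3 : ℝ)) : ℂ) := by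
    rw [hsig2, hsig3, hQ2, hQ3]
    push_cast
    ring
  have hRHSeq : 3 * 2 ^ (2*n) * (2 * (Sb.card : ℂ) - 1) ^ 2
      = (((3 * 2^(2*n) * Sr^2 : ℝ)) : ℂ) := by
    rw [hSr]
    push_cast
    ring
  -- real facts
  have hacfsum : ∑ c : Fin n → ZMod 2, acf Sb gstar c = Sr := acf_total Sb gstar hg
  have hq2le : q2 ≤ Sr^2 := by
    rw [hq2, ← hacfsum]
    exact Finset.sum_sq_le_sq_sum_of_nonneg fun c _ => acf_nonneg Sb gstar c
  have hretotal : ∑ x : Fin n → ZMod 4, (W x).re = Sr := re_total Sb gstar hg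
  have hq3le : q3 ≤ Sr * Sr - q2 := by
    have hre : q3 = ∑ x : Fin n → ZMod 4, ∑ y : Fin n → ZMod 4,
        (W x * W y * W (-(x+y))).re := by
      rw [hq3def, hQ3C, Complex.re_sum]
      exact Finset.sum_congr rfl fun x _ => Complex.re_sum _ _
    have hbnd : ∑ x : Fin n → ZMod 4, ∑ y : Fin n → ZMod 4,
        (W x * W y * W (-(x+y))).re
        ≤ ∑ x : Fin n → ZMod 4, ∑ y : Fin n → ZMod 4,
            (if par x = par y then 0 else (W x).re * (W y).re) :=
      Finset.sum_le_sum fun x _ => Finset.sum_le_sum fun y _ =>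
        wgt_pointwise Sb gstar hΩ hg x y
    have hsplit : ∑ x : Fin n → ZMod 4, ∑ y : Fin n → ZMod 4,
        (if par x = par y then 0 else (W x).re * (W y).re)
        = (∑ x : Fin n → ZMod 4, (W x).re) * (∑ y : Fin n → ZMod 4, (W y).re)
          - ∑ x : Fin n → ZMod 4, ∑ y : Fin n → ZMod 4,
              (if par x = par y then (W x).re * (W y).re else 0) := by
      rw [Finset.sum_mul_sum, ← Finset.sum_sub_distrib]
      refine Finset.sum_congr rfl fun x _ => ?_
      rw [← Finset.sum_sub_distrib]
      refine Finset.sum_congr rfl fun y _ => ?_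
      by_cases h : par x = par y
      · rw [if_pos h, if_pos h]; ring
      · rw [if_neg h, if_neg h]; ring
    rw [hre]
    calc ∑ x : Fin n → ZMod 4, ∑ y : Fin n → ZMod 4, (W x * W y * W (-(x+y))).re
        ≤ ∑ x : Fin n → ZMod 4, ∑ y : Fin n → ZMod 4,
            (if par x = par y then 0 else (W x).re * (W y).re) := hbnd
      _ = Sr * Sr - q2 := by
          rw [hsplit, hretotal, hq2, ← Q2_re_eq Sb gstar]
  -- power bookkeeping
  have hpow2 : (2:ℝ)^n * 2^n = 2^(2*n) := by rw [two_mul, pow_add]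
  have hpow4 : (4:ℝ)^n = 2^(2*n) := by rw [pow_mul]; norm_num
  have hmain : 3 * 2^n * ((2:ℝ)^n * q2) + 4^n * q3 ≤ 3 * 2^(2*n) * Sr^2 := by
    have h1 : 3 * q2 + q3 ≤ 3 * Sr^2 := by nlinarith [hq2le, hq3le]
    have h2 : (0:ℝ) ≤ 2^(2*n) := by positivity
    nlinarith [mul_le_mul_of_nonneg_left h1 h2, hpow2, hpow4]
  constructor
  · rw [hLHSeq, hRHSeq]
    exact Complex.real_le_real.mpr hmain
  constructor
  · -- equality implies even
    intro heq
    by_contra hne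
    push_neg at hne
    obtain ⟨g, hgS, g', hg'S, hgg'⟩ := hne
    have hdiff : par g' ≠ par g := fun hc => hgg' ((par_sum_cond g g').mpr hc)
    -- find an element whose class differs from that of gstar
    have hex : ∃ g1 ∈ Sb, par g1 ≠ par gstar := by
      by_cases hpg : par g = par gstar
      · exact ⟨g', hg'S, fun hc => hdiff (by rw [hc, hpg])⟩
      · exact ⟨g, hgS, hpg⟩
    obtain ⟨g1, hg1S, hg1par⟩ := hex
    have hg1erase : g1 ∈ Sb.erase gstar :=
      Finset.mem_erase.mpr ⟨fun hc => hg1par (by rw [hc]), hg1S⟩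
    set c1 := par g1 with hc1
    set c2 := par gstar with hc2
    have hcc : c1 ≠ c2 := hg1par
    -- class masses
    have hP : 1 ≤ acf Sb gstar c1 := by
      have hmem : g1 ∈ Finset.univ.filter (fun x => par x = c1) := by
        simp [hc1]
      have := Finset.single_le_sum
        (f := fun x => (wgt Sb gstar x).re)
        (fun x _ => wgt_re_nonneg Sb gstar x) hmem
      rw [wgt_mem Sb gstar hΩ hg g1 hg1erase] at this
      simpa [acf] using this
    have hQv : (1:ℝ)/2 ≤ acf Sb gstar c2 := by
      have hmem : gstar ∈ Finset.univ.filter (fun x => par x = c2) := by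
        simp [hc2]
      have := Finset.single_le_sum
        (f := fun x => (wgt Sb gstar x).re)
        (fun x _ => wgt_re_nonneg Sb gstar x) hmem
      rw [wgt_gstar Sb gstar hΩ hg] at this
      have hhalf : ((1+Complex.I)/2).re = 1/2 := by
        norm_num [Complex.div_re]
      rw [hhalf] at this
      simpa [acf] using this
    -- pair bound
    have hpair : ∀ c c' : Fin n → ZMod 2, c ≠ c' →
        acf Sb gstar c + acf Sb gstar c' ≤ Sr := by
      intro c c' hne'
      rw [← hacfsum, ← Finset.sum_pair hne']
      exact Finset.sum_le_sum_of_subset_of_nonneg (Finset.subset_univ _)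
        (fun i _ _ => acf_nonneg Sb gstar i)
    -- strict bound on q2
    have hq2strict : q2 ≤ Sr^2 - 1 := by
      have hub : ∀ c : Fin n → ZMod 2, acf Sb gstar c
          ≤ Sr - (if c = c1 then acf Sb gstar c2 else
              if c = c2 then acf Sb gstar c1 else 0) := by
        intro c
        by_cases h1 : c = c1
        · rw [if_pos h1, h1]
          have := hpair c1 c2 hcc
          linarith
        by_cases h2 : c = c2
        · rw [if_neg h1, if_pos h2, h2]
          have := hpair c2 c1 (Ne.symm hcc)
          linarith
        · rw [if_neg h1, if_neg h2]
          have hle : acf Sb gstar c ≤ ∑ c' : Fin n → ZMod 2, acf Sb gstar c' :=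
            Finset.single_le_sum (fun i _ => acf_nonneg Sb gstar i) (Finset.mem_univ c)
          rw [hacfsum] at hle
          linarith
      have step1 : q2 ≤ ∑ c : Fin n → ZMod 2, acf Sb gstar c *
          (Sr - (if c = c1 then acf Sb gstar c2 else
              if c = c2 then acf Sb gstar c1 else 0)) := by
        rw [hq2]
        refine Finset.sum_le_sum fun c _ => ?_
        rw [sq]
        exact mul_le_mul_of_nonneg_left (hub c) (acf_nonneg Sb gstar c)
      have step2 : ∑ c : Fin n → ZMod 2, acf Sb gstar c *
          (Sr - (if c = c1 then acf Sb gstar c2 else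
              if c = c2 then acf Sb gstar c1 else 0))
          = Sr * Sr - (acf Sb gstar c1 * acf Sb gstar c2
              + acf Sb gstar c2 * acf Sb gstar c1) := by
        have expand : ∀ c : Fin n → ZMod 2, acf Sb gstar c *
            (Sr - (if c = c1 then acf Sb gstar c2 else
                if c = c2 then acf Sb gstar c1 else 0))
            = acf Sb gstar c * Sr
              - ((if c = c1 then acf Sb gstar c * acf Sb gstar c2 else 0)
                + (if c = c2 then acf Sb gstar c * acf Sb gstar c1 else 0)) := by
          intro c
          by_cases h1 : c = c1
          · rw [if_pos h1, if_pos h1, if_neg (by rw [h1]; exact hcc)]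
            ring
          by_cases h2 : c = c2
          · rw [if_neg h1, if_pos h2, if_neg h1, if_pos h2]
            ring
          · rw [if_neg h1, if_neg h2, if_neg h1, if_neg h2]
            ring
        rw [Finset.sum_congr rfl fun c _ => expand c, Finset.sum_sub_distrib,
          Finset.sum_add_distrib, ← Finset.sum_mul, hacfsum,
          Finset.sum_ite_eq' Finset.univ c1, Finset.sum_ite_eq' Finset.univ c2,
          if_pos (Finset.mem_univ _), if_pos (Finset.mem_univ _)]
      have hprod : 1 * (1/2) ≤ acf Sb gstar c1 * acf Sb gstar c2 :=
        mul_le_mul hP hQv (by norm_num) (by linarith)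
      calc q2 ≤ Sr * Sr - (acf Sb gstar c1 * acf Sb gstar c2
            + acf Sb gstar c2 * acf Sb gstar c1) := by rw [← step2]; exact step1
        _ ≤ Sr^2 - 1 := by nlinarith
    -- strict inequality contradicts equality
    have hstrict : 3 * 2^n * ((2:ℝ)^n * q2) + 4^n * q3 < 3 * 2^(2*n) * Sr^2 := by
      have h1 : 3 * q2 + q3 < 3 * Sr^2 := by nlinarith [hq3le, hq2strict]
      have h2 : (0:ℝ) < 2^(2*n) := by positivity
      nlinarith [mul_lt_mul_of_pos_left h1 h2, hpow2, hpow4]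
    rw [hLHSeq, hRHSeq] at heq
    have := Complex.ofReal_inj.mp heq
    linarith
  · -- even implies equality
    intro heven
    have hclass : ∀ g ∈ Sb, par g = par gstar := fun g hgS =>
      ((par_sum_cond g gstar).mp (heven g hgS gstar hg)).symm
    have hxclass : ∀ x : Fin n → ZMod 4, W x ≠ 0 → par x = par gstar := by
      intro x hx
      obtain ⟨g, hgS, hpg⟩ := wgt_supp_par Sb gstar hΩ hg hx
      rw [hpg, hclass g hgS]
    have hQ3zero : Q3C = 0 := by
      rw [hQ3C]
      refine Finset.sum_eq_zero fun x _ => Finset.sum_eq_zero fun y _ => ?_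
      by_cases hx : W x = 0
      · rw [hx, zero_mul, zero_mul]
      by_cases hy : W y = 0
      · rw [hy, mul_zero, zero_mul]
      have hpxy : par x = par y := by rw [hxclass x hx, hxclass y hy]
      have hz : W (-(x+y)) = 0 := by
        by_contra hc
        exact wgt_supp Sb gstar hΩ hg hc (par_neg_sum_zero hpxy.symm)
      rw [hz, mul_zero]
    have hQ2even : ∑ x : Fin n → ZMod 4, ∑ y : Fin n → ZMod 4,
        (if allEven (x+y) then W x * W y else 0)
        = (2 * (Sb.card : ℂ) - 1)^2 := by
      have step : ∀ x y : Fin n → ZMod 4,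
          (if allEven (x+y) then W x * W y else 0) = W x * W y := by
        intro x y
        by_cases hx : W x = 0
        · rw [hx, zero_mul, ite_self]
        by_cases hy : W y = 0
        · rw [hy, mul_zero, ite_self]
        rw [if_pos]
        rw [par_sum_cond]
        rw [hxclass x hx, hxclass y hy]
      rw [Finset.sum_congr rfl fun x _ => Finset.sum_congr rfl fun y _ => step x y]
      rw [← Finset.sum_mul_sum, wgt_total Sb gstar hg, sq]
    rw [hsig2, hsig3, hQ3zero, hQ2even]
    have hp : (2:ℂ)^n * 2^n = 2^(2*n) := by rw [two_mul, pow_add]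
    rw [← hp]
    ring
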